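/- Let b, b' : ℝ^d → ℝ^d be C¹ and Σ, Σ' : ℝ^d → ℝ^{d×d} be C² with Σ(x), Σ'(x) symmetric positive definite for every x. Let p, p' : (0,∞) × ℝ^d → (0,∞) be C^{1,2} such that p(t,·) and p'(t,·) are probability densities for each t and, pointwise, ∂_t p = −∇·(b p) + (1/2) ∑_{i,j} ∂²_{x_i x_j}(Σ_{ij} p) and ∂_t p' = −∇·(b' p') + (1/2) ∑_{i,j} ∂²_{x_i x_j}(Σ'_{ij} p'). Define h_i = b_i − (1/2) ∑_j ∂_{x_j} Σ_{ij} (and h' likewise with b', Σ'), and Φ(t,x) = (1/2)(Σ'(x) − Σ(x)) ∇p'(t,x)/p'(t,x) − (h'(x) − h(x)). Fix t > 0 and assume: (i) s ↦ KL(p(s,·)‖p'(s,·)) is differentiable at t with derivative equal to ∫ ∂_t p(t,x) log(p(t,x)/p'(t,x)) dx − ∫ (p(t,x)/p'(t,x)) ∂_t p'(t,x) dx, and ∫ ∂_t p(t,x) dx = 0; (ii) the integrals ∫ p ‖Σ^{−1/2} Φ‖² dx and ∫ p' (p'/p) ‖Σ^{1/2} ∇(p/p')‖² dx at time t are finite;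 (iii) each of the following C¹ vector fields (at time t) is Lebesgue-integrable with integrable divergence whose integral over ℝ^d is zero: (−b p + (1/2)∇·(Σ p)) log(p/p'), Σ p ∇log(p/p'), (−b p' + (1/2)∇·(Σ p'))(p/p'), Σ p' ∇(p/p'), and Φ p' (p/p'). Then (d/ds) KL(p(s,·)‖p'(s,·)) at s = t is at most (1/2) ∫_{ℝ^d} p(t,x) ‖Σ(x)^{−1/2} Φ(t,x)‖² dx. -/

import Mathlib

noncomputable section

open MeasureTheory

open scoped ComplexOrder in
/-- The positive semidefinite square root of a positive semidefinite matrix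
(the definition removed from Mathlib, restored with its old meaning). -/
def Matrix.PosSemidef.sqrt {n : Type*} [Fintype n] [DecidableEq n] {𝕜 : Type*} [RCLike 𝕜]
    {A : Matrix n n 𝕜} (hA : A.PosSemidef) : Matrix n n 𝕜 :=
  hA.1.eigenvectorUnitary.1 * Matrix.diagonal ((↑) ∘ (√·) ∘ hA.1.eigenvalues) *
  (star hA.1.eigenvectorUnitary : Matrix n n 𝕜)

/-- `ℝ^d` with the Euclidean structure. -/
abbrev Euc (d : ℕ) := EuclideanSpace ℝ (Fin d)

/-- Partial derivative `∂_{x_i} f` of a scalar function on `ℝ^d`. -/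
def pd {d : ℕ} (i : Fin d) (f : Euc d → ℝ) (x : Euc d) : ℝ :=
  fderiv ℝ f x (EuclideanSpace.single i 1)

/-- Divergence `∇·G = ∑ i ∂_{x_i} G_i` of a vector field on `ℝ^d`. -/
def diverg {d : ℕ} (G : Euc d → Euc d) (x : Euc d) : ℝ :=
  ∑ i, pd i (fun y => G y i) x

/-- The Kullback–Leibler divergence `KL(p‖p') = ∫ p log(p/p')` (w.r.t. Lebesgue measure). -/
def KLdiv {d : ℕ} (p p' : Euc d → ℝ) : ℝ :=
  ∫ x, p x * Real.log (p x / p' x)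

/-- `h_i = b_i − (1/2) ∑_j ∂_{x_j} Σ_{ij}`. -/
def hVec {d : ℕ} (b : Euc d → Euc d) (S : Euc d → Matrix (Fin d) (Fin d) ℝ)
    (x : Euc d) : Euc d :=
  WithLp.toLp 2 fun i => b x i - (1 / 2) * ∑ j, pd j (fun y => S y i j) x

/-- `Φ = (1/2)(Σ' − Σ)∇q/q − (h' − h)`, for a (time-frozen) positive density `q`. -/
def PhiVec {d : ℕ} (b b' : Euc d → Euc d)
    (S S' : Euc d → Matrix (Fin d) (Fin d) ℝ) (q : Euc d → ℝ) (x : Euc d) : Euc d :=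
  WithLp.toLp 2 fun i =>
    (1 / 2) * (∑ j, (S' x i j - S x i j) * pd j q x) / q x
      - (hVec b' S' x i - hVec b S x i)

/-- The vector field `x ↦ −b q + (1/2)∇·(Σ q)`, i.e. with `i`-th component
`−b_i q + (1/2)∑_j ∂_{x_j}(Σ_{ij} q)`. -/
def Jvec {d : ℕ} (b : Euc d → Euc d) (S : Euc d → Matrix (Fin d) (Fin d) ℝ)
    (q : Euc d → ℝ) (x : Euc d) : Euc d :=
  WithLp.toLp 2 fun i => -(b x i * q x) + (1 / 2) * ∑ j, pd j (fun z => S z i j * q z) x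

/-- A C¹ vector field that is Lebesgue-integrable, with integrable divergence whose
integral over `ℝ^d` vanishes. -/
def GoodField {d : ℕ} (G : Euc d → Euc d) : Prop :=
  ContDiff ℝ 1 G ∧ Integrable G volume ∧ Integrable (diverg G) volume ∧
    (∫ x, diverg G x) = 0

lemma psd_sqrt_mul_self {d : ℕ} {A : Matrix (Fin d) (Fin d) ℝ} (hA : A.PosSemidef) :
    hA.sqrt * hA.sqrt = A := by
  conv_rhs => rw [hA.1.spectral_theorem]
  simp only [Matrix.PosSemidef.sqrt, Unitary.conjStarAlgAut_apply]
  have hU : (star hA.1.eigenvectorUnitary : Matrix (Fin d) (Fin d) ℝ) * hA.1.eigenvectorUnitary.1 = 1 :=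
    Unitary.coe_star_mul_self _
  rw [show ∀ a b c e f g : Matrix (Fin d) (Fin d) ℝ, a * b * c * (e * f * g) = a * (b * (c * e) * f) * g
    from fun a b c e f g => by simp only [Matrix.mul_assoc], hU, Matrix.mul_one, Matrix.diagonal_mul_diagonal]
  congr 3
  funext i
  simp [Real.mul_self_sqrt (hA.eigenvalues_nonneg i)]

lemma psd_sqrt_isHermitian {d : ℕ} {A : Matrix (Fin d) (Fin d) ℝ} (hA : A.PosSemidef) :
    hA.sqrt.IsHermitian := by
  simp only [Matrix.IsHermitian, Matrix.PosSemidef.sqrt, Matrix.conjTranspose_mul,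
    Matrix.star_eq_conjTranspose, Matrix.conjTranspose_conjTranspose, Matrix.diagonal_conjTranspose,
    Matrix.mul_assoc, star_trivial]

/-! ### Auxiliary lemmas -/

section Aux

variable {d : ℕ} {f g : Euc d → ℝ} {x : Euc d} {i : Fin d}

lemma pd_add (hf : DifferentiableAt ℝ f x) (hg : DifferentiableAt ℝ g x) :
    pd i (fun y => f y + g y) x = pd i f x + pd i g x := by
  simp [pd, fderiv_fun_add hf hg]

lemma pd_neg : pd i (fun y => -f y) x = -pd i f x := by
  simp [pd, fderiv_neg]

lemma pd_const_mul (c : ℝ) (hf : DifferentiableAt ℝ f x) :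
    pd i (fun y => c * f y) x = c * pd i f x := by
  simp [pd, fderiv_const_mul hf c]

lemma pd_mul (hf : DifferentiableAt ℝ f x) (hg : DifferentiableAt ℝ g x) :
    pd i (fun y => f y * g y) x = pd i f x * g x + f x * pd i g x := by
  simp [pd, fderiv_fun_mul hf hg]; ring

lemma pd_sum {ι : Type*} (s : Finset ι) (F : ι → Euc d → ℝ)
    (h : ∀ j ∈ s, DifferentiableAt ℝ (F j) x) :
    pd i (fun y => ∑ j ∈ s, F j y) x = ∑ j ∈ s, pd i (F j) x := by
  simp only [pd]; rw [fderiv_fun_sum h]; simp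

lemma pd_div (hf : DifferentiableAt ℝ f x) (hg : DifferentiableAt ℝ g x) (hgx : g x ≠ 0) :
    pd i (fun y => f y / g y) x
      = (pd i f x * g x - f x * pd i g x) / g x ^ 2 := by
  have hinv : HasFDerivAt (fun y => (g y)⁻¹) ((-(g x ^ 2)⁻¹) • fderiv ℝ g x) x := by
    simpa [Function.comp_def] using (hasDerivAt_inv hgx).comp_hasFDerivAt x hg.hasFDerivAt
  have h := (hf.hasFDerivAt.fun_mul hinv).fderiv
  simp only [pd, show (fun y => f y / g y) = fun y => f y * (g y)⁻¹ by
    ext y; rw [div_eq_mul_inv]]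
  rw [h]
  simp only [ContinuousLinearMap.add_apply, ContinuousLinearMap.smul_apply, smul_eq_mul]
  field_simp; ring

lemma pd_log (hf : DifferentiableAt ℝ f x) (hfx : f x ≠ 0) :
    pd i (fun y => Real.log (f y)) x = pd i f x / f x := by
  have h := ((Real.hasDerivAt_log hfx).comp_hasFDerivAt x hf.hasFDerivAt).fderiv
  simp only [pd, show (fun y => Real.log (f y)) = Real.log ∘ f from rfl, h,
    ContinuousLinearMap.smul_apply, smul_eq_mul]
  rw [div_eq_inv_mul]

lemma pd_contDiff {n : ℕ} (hf : ContDiff ℝ (n + 1 : ℕ) f) : ContDiff ℝ (n : ℕ) (pd i f) := by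
  have h1 : ContDiff ℝ (n : ℕ) (fderiv ℝ f) := hf.fderiv_right (by norm_cast)
  exact h1.clm_apply contDiff_const

lemma contDiff_pd1 : ∀ (_ : ContDiff ℝ 2 f), ContDiff ℝ 1 (pd i f) := fun hf =>
  pd_contDiff (n := 1) (by exact_mod_cast hf)

lemma pd_continuous (hf : ContDiff ℝ 1 f) : Continuous (pd i f) := by
  have : ContDiff ℝ ((0 : ℕ) : ℕ∞) (pd i f) := pd_contDiff (n := 0) (by exact_mod_cast hf)
  exact this.continuous

lemma gradient_apply_eq_pd (i : Fin d) : gradient f x i = pd i f x := by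
  have h : (inner (𝕜 := ℝ) (gradient f x) (EuclideanSpace.single i (1 : ℝ)))
      = fderiv ℝ f x (EuclideanSpace.single i 1) := by
    rw [gradient, InnerProductSpace.toDual_symm_apply]
  simp only [EuclideanSpace.inner_single_right] at h
  simpa [pd] using h

lemma contDiff_proj (i : Fin d) {n : ℕ∞} {b : Euc d → Euc d} (hb : ContDiff ℝ n b) :
    ContDiff ℝ n fun x => b x i := by
  exact (ContinuousLinearMap.contDiff (EuclideanSpace.proj i)).comp hb

/-! #### Linear-algebra lemmas -/

lemma euc_inner (u v : Euc d) : inner ℝ u v = ∑ i, u i * v i := by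
  simp [PiLp.inner_apply, mul_comm]

lemma toEuclideanLin_coord (A : Matrix (Fin d) (Fin d) ℝ) (v : Euc d) (i : Fin d) :
    Matrix.toEuclideanLin A v i = ∑ j, A i j * v j := by
  simp only [Matrix.toEuclideanLin_apply]
  rfl

lemma toEuclideanLin_mul' (A B : Matrix (Fin d) (Fin d) ℝ) (v : Euc d) :
    Matrix.toEuclideanLin (A * B) v = Matrix.toEuclideanLin A (Matrix.toEuclideanLin B v) := by
  simp [Matrix.toEuclideanLin_apply, Matrix.mulVec_mulVec]

lemma sqrt_det_unit {A : Matrix (Fin d) (Fin d) ℝ} (hA : A.PosDef) :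
    IsUnit (hA.posSemidef.sqrt).det := by
  have h : (hA.posSemidef.sqrt).det * (hA.posSemidef.sqrt).det = A.det := by
    rw [← Matrix.det_mul, psd_sqrt_mul_self hA.posSemidef]
  have hd := hA.det_pos
  refine isUnit_iff_ne_zero.2 (fun h0 => ?_)
  rw [h0, mul_zero] at h
  exact hd.ne' h.symm

lemma sqrt_inv_mul_cancel {A : Matrix (Fin d) (Fin d) ℝ} (hA : A.PosDef) (w : Euc d) :
    Matrix.toEuclideanLin hA.posSemidef.sqrt
      (Matrix.toEuclideanLin (hA.posSemidef.sqrt)⁻¹ w) = w := by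
  rw [← toEuclideanLin_mul', Matrix.mul_nonsing_inv _ (sqrt_det_unit hA)]
  simp [Matrix.toEuclideanLin_apply]

lemma norm_sq_sqrt_apply {A : Matrix (Fin d) (Fin d) ℝ} (hA : A.PosDef) (u : Euc d) :
    ‖Matrix.toEuclideanLin hA.posSemidef.sqrt u‖ ^ 2 = ∑ i, u i * ∑ j, A i j * u j := by
  have hsym : (Matrix.toEuclideanLin hA.posSemidef.sqrt).IsSymmetric :=
    Matrix.isHermitian_iff_isSymmetric.1 (psd_sqrt_isHermitian hA.posSemidef)
  rw [← real_inner_self_eq_norm_sq, hsym u, ← toEuclideanLin_mul',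
    psd_sqrt_mul_self hA.posSemidef, euc_inner]
  exact Finset.sum_congr rfl fun i _ => by rw [toEuclideanLin_coord]

lemma key_pointwise_ineq {A : Matrix (Fin d) (Fin d) ℝ} (hA : A.PosDef) (u w : Euc d)
    {P P' : ℝ} (hP : 0 < P) (hP' : 0 < P') :
    -(1 / 2) * (P' * (P' / P)) * (∑ i, u i * ∑ j, A i j * u j) + P' * (∑ i, u i * w i)
      ≤ (1 / 2) * (P * ‖Matrix.toEuclideanLin (hA.posSemidef.sqrt)⁻¹ w‖ ^ 2) := by
  set M := Matrix.toEuclideanLin hA.posSemidef.sqrt with hM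
  set N := Matrix.toEuclideanLin (hA.posSemidef.sqrt)⁻¹ with hN
  have hsym : M.IsSymmetric :=
    Matrix.isHermitian_iff_isSymmetric.1 (psd_sqrt_isHermitian hA.posSemidef)
  have hq : (∑ i, u i * ∑ j, A i j * u j) = ‖M u‖ ^ 2 := (norm_sq_sqrt_apply hA u).symm
  have hip : (∑ i, u i * w i) = inner ℝ (M u) (N w) := by
    rw [hsym u (N w), sqrt_inv_mul_cancel hA w, euc_inner]
  have hcs : inner ℝ (M u) (N w) ≤ ‖M u‖ * ‖N w‖ := real_inner_le_norm _ _
  rw [hq, hip]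
  have h2 : P' * inner ℝ (M u) (N w) ≤ P' * (‖M u‖ * ‖N w‖) :=
    mul_le_mul_of_nonneg_left hcs hP'.le
  have hPP : P' * (P' / P) * P = P' * P' := by field_simp
  nlinarith [sq_nonneg (P' * ‖M u‖ - P * ‖N w‖), hP, hP', h2, hPP,
    norm_nonneg (M u), norm_nonneg (N w), sq_nonneg ‖M u‖, sq_nonneg ‖N w‖]

lemma abs_L_le {A : Matrix (Fin d) (Fin d) ℝ} (hA : A.PosDef) (u w : Euc d)
    {P P' : ℝ} (hP : 0 < P) (hP' : 0 < P') :
    |P' * ∑ i, u i * w i|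
      ≤ (1 / 2) * (P' * (P' / P) * ‖Matrix.toEuclideanLin hA.posSemidef.sqrt u‖ ^ 2
          + P * ‖Matrix.toEuclideanLin (hA.posSemidef.sqrt)⁻¹ w‖ ^ 2) := by
  set M := Matrix.toEuclideanLin hA.posSemidef.sqrt with hM
  set N := Matrix.toEuclideanLin (hA.posSemidef.sqrt)⁻¹ with hN
  have hsym : M.IsSymmetric :=
    Matrix.isHermitian_iff_isSymmetric.1 (psd_sqrt_isHermitian hA.posSemidef)
  have hip : (∑ i, u i * w i) = inner ℝ (M u) (N w) := by
    rw [hsym u (N w), sqrt_inv_mul_cancel hA w, euc_inner]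
  have hcs : |inner ℝ (M u) (N w)| ≤ ‖M u‖ * ‖N w‖ := abs_real_inner_le_norm _ _
  rw [hip, abs_mul, abs_of_pos hP']
  have h2 : P' * |inner ℝ (M u) (N w)| ≤ P' * (‖M u‖ * ‖N w‖) :=
    mul_le_mul_of_nonneg_left hcs hP'.le
  have hPP : P' * (P' / P) * P = P' * P' := by field_simp
  nlinarith [sq_nonneg (P' * ‖M u‖ - P * ‖N w‖), hP, hP', h2, hPP,
    norm_nonneg (M u), norm_nonneg (N w)]

/-! #### Divergence lemmas -/

variable {b b' : Euc d → Euc d} {S S' : Euc d → Matrix (Fin d) (Fin d) ℝ} {q : Euc d → ℝ}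

lemma diverg_smul (φ : Euc d → ℝ) (G : Euc d → Euc d) (x : Euc d)
    (hφ : DifferentiableAt ℝ φ x) (hG : ∀ i, DifferentiableAt ℝ (fun y => G y i) x) :
    diverg (fun y => φ y • G y) x = (∑ i, pd i φ x * G x i) + φ x * diverg G x := by
  simp only [diverg]
  have : ∀ i : Fin d, pd i (fun y => (φ y • G y) i) x
      = pd i φ x * G x i + φ x * pd i (fun y => G y i) x := fun i => pd_mul hφ (hG i)
  rw [Finset.sum_congr rfl (fun i _ => this i), Finset.sum_add_distrib, Finset.mul_sum]

lemma FP_eq_diverg_Jvec (hq : ContDiff ℝ 2 q) (hb : ContDiff ℝ 1 b)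
    (hS : ∀ i j, ContDiff ℝ 2 fun x => S x i j) (x : Euc d) :
    -(diverg (fun y => q y • b y) x)
      + (1 / 2) * ∑ i, ∑ j, pd i (fun y => pd j (fun z => S z i j * q z) y) x
    = diverg (Jvec b S q) x := by
  have hq1 : ContDiff ℝ 1 q := hq.of_le one_le_two
  have hdiffsum : ∀ i : Fin d, DifferentiableAt ℝ
      (fun y => ∑ j, pd j (fun z => S z i j * q z) y) x := by
    intro i
    exact DifferentiableAt.fun_sum fun j _ =>
      ((contDiff_pd1 ((hS i j).mul hq)).differentiable one_ne_zero).differentiableAt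
  have hbq : ∀ i : Fin d, DifferentiableAt ℝ (fun y => b y i * q y) x := fun i =>
    (((contDiff_proj i hb).differentiable one_ne_zero x)).mul (hq1.differentiable one_ne_zero x)
  simp only [diverg, Jvec]
  have : ∀ i : Fin d,
      pd i (fun y => -(b y i * q y) + (1 / 2) * ∑ j, pd j (fun z => S z i j * q z) y) x
      = -pd i (fun y => b y i * q y) x
        + (1 / 2) * ∑ j, pd i (fun y => pd j (fun z => S z i j * q z) y) x := by
    intro i
    rw [pd_add (f := fun y => -(b y i * q y)) ((hbq i).neg) ((hdiffsum i).const_mul _), pd_neg,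
      pd_const_mul _ (hdiffsum i),
      pd_sum _ _ (fun j _ =>
        ((contDiff_pd1 ((hS i j).mul hq)).differentiable one_ne_zero).differentiableAt)]
  rw [Finset.sum_congr rfl fun i _ => this i, Finset.sum_add_distrib, Finset.mul_sum]
  have hcomm : ∀ i : Fin d, (fun y => (q y • b y) i) = fun y => b y i * q y := by
    intro i; funext y
    show q y * b y i = b y i * q y
    ring
  have hc : (∑ i, pd i (fun y => (q y • b y) i) x) = ∑ i, pd i (fun y => b y i * q y) x :=
    Finset.sum_congr rfl fun i _ => congrArg (fun fn => pd i fn x) (hcomm i)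
  rw [hc, Finset.sum_neg_distrib]

lemma Jvec_decomp (hq : ContDiff ℝ 2 q)
    (hS : ∀ i j, ContDiff ℝ 2 fun x => S x i j)
    (hS' : ∀ i j, ContDiff ℝ 2 fun x => S' x i j)
    (hqpos : ∀ x, 0 < q x) (x : Euc d) (i : Fin d) :
    Jvec b' S' q x i = Jvec b S q x i + q x * PhiVec b b' S S' q x i := by
  have hq1 : Differentiable ℝ q := (hq.of_le one_le_two).differentiable one_ne_zero
  have hpdm : ∀ (T : Euc d → Matrix (Fin d) (Fin d) ℝ)
      (_ : ∀ i j, ContDiff ℝ 2 fun x => T x i j) (j : Fin d),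
      pd j (fun z => T z i j * q z) x
        = pd j (fun z => T z i j) x * q x + T x i j * pd j q x := fun T hT j =>
    pd_mul (((hT i j).differentiable two_ne_zero).differentiableAt) (hq1.differentiableAt)
  simp only [Jvec, PhiVec, hVec]
  rw [Finset.sum_congr rfl fun j _ => hpdm S' hS' j,
    Finset.sum_congr rfl fun j _ => hpdm S hS j]
  have hsub : (∑ j, (S' x i j - S x i j) * pd j q x)
      = (∑ j, S' x i j * pd j q x) - ∑ j, S x i j * pd j q x := by
    rw [← Finset.sum_sub_distrib]
    exact Finset.sum_congr rfl fun j _ => by ring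
  rw [hsub, Finset.sum_add_distrib, Finset.sum_add_distrib, ← Finset.sum_mul, ← Finset.sum_mul]
  have hne := (hqpos x).ne'
  field_simp
  ring

/-! #### Component smoothness -/

lemma contDiff_Jvec_comp (hb : ContDiff ℝ 1 b) (hS : ∀ i j, ContDiff ℝ 2 fun x => S x i j)
    (hq : ContDiff ℝ 2 q) (i : Fin d) : ContDiff ℝ 1 fun y => Jvec b S q y i := by
  show ContDiff ℝ 1 fun y => -(b y i * q y) + (1 / 2) * ∑ j, pd j (fun z => S z i j * q z) y
  exact (((contDiff_proj i hb).mul (hq.of_le one_le_two)).neg).add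
    (contDiff_const.mul (ContDiff.sum fun j _ => contDiff_pd1 ((hS i j).mul hq)))

lemma contDiff_hVec_comp (hb : ContDiff ℝ 1 b) (hS : ∀ i j, ContDiff ℝ 2 fun x => S x i j)
    (i : Fin d) : ContDiff ℝ 1 fun y => hVec b S y i := by
  show ContDiff ℝ 1 fun y => b y i - (1 / 2) * ∑ j, pd j (fun z => S z i j) y
  exact (contDiff_proj i hb).sub
    (contDiff_const.mul (ContDiff.sum fun j _ => contDiff_pd1 (hS i j)))

lemma contDiff_Phi_comp (hb : ContDiff ℝ 1 b) (hb' : ContDiff ℝ 1 b')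
    (hS : ∀ i j, ContDiff ℝ 2 fun x => S x i j) (hS' : ∀ i j, ContDiff ℝ 2 fun x => S' x i j)
    (hq : ContDiff ℝ 2 q) (hqne : ∀ x, q x ≠ 0) (i : Fin d) :
    ContDiff ℝ 1 fun y => PhiVec b b' S S' q y i := by
  show ContDiff ℝ 1 fun y =>
    (1 / 2) * (∑ j, (S' y i j - S y i j) * pd j q y) / q y
      - (hVec b' S' y i - hVec b S y i)
  refine ContDiff.sub ?_ ((contDiff_hVec_comp hb' hS' i).sub (contDiff_hVec_comp hb hS i))
  refine ContDiff.div ?_ (hq.of_le one_le_two) hqne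
  exact contDiff_const.mul (ContDiff.sum fun j _ =>
    (((hS' i j).of_le one_le_two).sub ((hS i j).of_le one_le_two)).mul (contDiff_pd1 hq))

variable {b b' : Euc d → Euc d} {S S' : Euc d → Matrix (Fin d) (Fin d) ℝ} {P P' : Euc d → ℝ}

/-- The central pointwise identity. -/
lemma pointwise_identity (hb : ContDiff ℝ 1 b) (hb' : ContDiff ℝ 1 b')
    (hS : ∀ i j, ContDiff ℝ 2 fun x => S x i j) (hS' : ∀ i j, ContDiff ℝ 2 fun x => S' x i j)
    (hP : ContDiff ℝ 2 P) (hP' : ContDiff ℝ 2 P')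
    (hPpos : ∀ x, 0 < P x) (hP'pos : ∀ x, 0 < P' x) (x : Euc d) :
    diverg (Jvec b S P) x * Real.log (P x / P' x)
        - (P x / P' x) * diverg (Jvec b' S' P') x
      = (diverg (fun y => Real.log (P y / P' y) • Jvec b S P y) x
          - diverg (fun y => (P y / P' y) • Jvec b S P' y) x
          - diverg (fun y => P y • PhiVec b b' S S' P' y) x)
        + (-(1 / 2) * (P' x * (P' x / P x))
              * (∑ i, pd i (fun y => P y / P' y) x
                  * ∑ j, S x i j * pd j (fun y => P y / P' y) x)
            + P' x * ∑ i, pd i (fun y => P y / P' y) x * PhiVec b b' S S' P' x i) := by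
  have hPne : ∀ y, P y ≠ 0 := fun y => (hPpos y).ne'
  have hP'ne : ∀ y, P' y ≠ 0 := fun y => (hP'pos y).ne'
  have hPd : Differentiable ℝ P := (hP.of_le one_le_two).differentiable one_ne_zero
  have hP'd : Differentiable ℝ P' := (hP'.of_le one_le_two).differentiable one_ne_zero
  have hr2 : ContDiff ℝ 2 (fun y => P y / P' y) := hP.div hP' hP'ne
  have hrd : DifferentiableAt ℝ (fun y => P y / P' y) x :=
    ((hr2.of_le one_le_two).differentiable one_ne_zero).differentiableAt
  have hrpos : 0 < P x / P' x := div_pos (hPpos x) (hP'pos x)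
  have hlogd : DifferentiableAt ℝ (fun y => Real.log (P y / P' y)) x := hrd.log hrpos.ne'
  have hJPd : ∀ i, DifferentiableAt ℝ (fun y => Jvec b S P y i) x := fun i =>
    ((contDiff_Jvec_comp hb hS hP i).differentiable one_ne_zero).differentiableAt
  have hJP'd : ∀ i, DifferentiableAt ℝ (fun y => Jvec b S P' y i) x := fun i =>
    ((contDiff_Jvec_comp hb hS hP' i).differentiable one_ne_zero).differentiableAt
  have hΦd : ∀ i, DifferentiableAt ℝ (fun y => PhiVec b b' S S' P' y i) x := fun i =>
    ((contDiff_Phi_comp hb hb' hS hS' hP' hP'ne i).differentiable one_ne_zero).differentiableAt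
  have hWd : ∀ i, DifferentiableAt ℝ (fun y => P' y * PhiVec b b' S S' P' y i) x := fun i =>
    (hP'd x).mul (hΦd i)
  -- Step A: smul divergences
  have hd1 := diverg_smul (fun y => Real.log (P y / P' y)) (Jvec b S P) x hlogd hJPd
  have hd3 := diverg_smul (fun y => P y / P' y) (Jvec b S P') x hrd hJP'd
  have hd5 := diverg_smul (fun y => P y / P' y)
    (fun y => P' y • PhiVec b b' S S' P' y) x hrd hWd
  have hfield : (fun y => P y • PhiVec b b' S S' P' y)
      = fun y => (P y / P' y) • (P' y • PhiVec b b' S S' P' y) := by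
    funext y
    rw [smul_smul, div_mul_cancel₀ _ (hP'ne y)]
  have hdecomp : diverg (Jvec b' S' P') x
      = diverg (Jvec b S P') x + diverg (fun y => P' y • PhiVec b b' S S' P' y) x := by
    have hcomp : ∀ i : Fin d, pd i (fun y => Jvec b' S' P' y i) x
        = pd i (fun y => Jvec b S P' y i) x
          + pd i (fun y => P' y * PhiVec b b' S S' P' y i) x := by
      intro i
      rw [show (fun y => Jvec b' S' P' y i)
          = fun y => Jvec b S P' y i + P' y * PhiVec b b' S S' P' y i from
        funext fun y => Jvec_decomp hP' hS hS' hP'pos y i]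
      exact pd_add (hJP'd i) (hWd i)
    show (∑ i, pd i (fun y => Jvec b' S' P' y i) x) = _
    rw [Finset.sum_congr rfl fun i _ => hcomp i, Finset.sum_add_distrib]
    rfl
  have hquad : ∀ i : Fin d,
      -(pd i (fun y => Real.log (P y / P' y)) x * Jvec b S P x i)
          + pd i (fun y => P y / P' y) x * Jvec b S P' x i
        = -(1 / 2) * (P' x * (P' x / P x))
            * (pd i (fun y => P y / P' y) x * ∑ j, S x i j * pd j (fun y => P y / P' y) x) := by
    intro i
    have hplog : pd i (fun y => Real.log (P y / P' y)) x
        = pd i (fun y => P y / P' y) x / (P x / P' x) := pd_log hrd hrpos.ne'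
    have hJP : Jvec b S P x i
        = -(b x i * P x) + (1 / 2) * ((∑ j, pd j (fun z => S z i j) x) * P x
            + ∑ j, S x i j * pd j P x) := by
      show -(b x i * P x) + (1 / 2) * (∑ j, pd j (fun z => S z i j * P z) x) = _
      rw [Finset.sum_congr rfl fun j _ => pd_mul
        (((hS i j).differentiable two_ne_zero).differentiableAt) (hPd x),
        Finset.sum_add_distrib, Finset.sum_mul]
    have hJP' : Jvec b S P' x i
        = -(b x i * P' x) + (1 / 2) * ((∑ j, pd j (fun z => S z i j) x) * P' x
            + ∑ j, S x i j * pd j P' x) := by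
      show -(b x i * P' x) + (1 / 2) * (∑ j, pd j (fun z => S z i j * P' z) x) = _
      rw [Finset.sum_congr rfl fun j _ => pd_mul
        (((hS i j).differentiable two_ne_zero).differentiableAt) (hP'd x),
        Finset.sum_add_distrib, Finset.sum_mul]
    have hSC : (∑ j, S x i j * pd j (fun y => P y / P' y) x)
        = ((∑ j, S x i j * pd j P x) * P' x - (∑ j, S x i j * pd j P' x) * P x)
            / P' x ^ 2 := by
      rw [Finset.sum_mul, Finset.sum_mul, ← Finset.sum_sub_distrib, Finset.sum_div]
      refine Finset.sum_congr rfl fun j _ => ?_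
      rw [show pd j (fun y => P y / P' y) x
          = (pd j P x * P' x - P x * pd j P' x) / P' x ^ 2 from
        pd_div (hPd x) (hP'd x) (hP'ne x)]
      field_simp
    rw [hplog, hJP, hJP', hSC]
    have h1 := hPne x; have h2 := hP'ne x
    field_simp
    ring
  have hsum5 : (∑ i, pd i (fun y => P y / P' y) x * (P' x • PhiVec b b' S S' P' x) i)
      = P' x * ∑ i, pd i (fun y => P y / P' y) x * PhiVec b b' S S' P' x i := by
    rw [Finset.mul_sum]
    exact Finset.sum_congr rfl fun i _ => by
      show pd i (fun y => P y / P' y) x * (P' x * PhiVec b b' S S' P' x i) = _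
      ring
  rw [hfield]
  beta_reduce at hd1 hd3 hd5
  have hsplit : (∑ i, pd i (fun y => Real.log (P y / P' y)) x * Jvec b S P x i)
      - (∑ i, pd i (fun y => P y / P' y) x * Jvec b S P' x i)
      = (1 / 2) * (P' x * (P' x / P x))
          * ∑ i, pd i (fun y => P y / P' y) x
              * ∑ j, S x i j * pd j (fun y => P y / P' y) x := by
    rw [← Finset.sum_sub_distrib, Finset.mul_sum]
    refine Finset.sum_congr rfl fun i _ => ?_
    linarith [hquad i]
  linear_combination (-1 : ℝ) * hd1 + hd3 + hd5 - (P x / P' x) * hdecomp - hsplit + hsum5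

end Aux

/-- The divergence-form part `D` of the pointwise identity. -/
def Dfun {d : ℕ} (b b' : Euc d → Euc d) (S S' : Euc d → Matrix (Fin d) (Fin d) ℝ)
    (P P' : Euc d → ℝ) (x : Euc d) : ℝ :=
  diverg (fun y => Real.log (P y / P' y) • Jvec b S P y) x
    - diverg (fun y => (P y / P' y) • Jvec b S P' y) x
    - diverg (fun y => P y • PhiVec b b' S S' P' y) x

/-- The non-divergence part `K` of the pointwise identity. -/
def Kfun {d : ℕ} (b b' : Euc d → Euc d) (S S' : Euc d → Matrix (Fin d) (Fin d) ℝ)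
    (P P' : Euc d → ℝ) (x : Euc d) : ℝ :=
  -(1 / 2) * (P' x * (P' x / P x))
      * (∑ i, pd i (fun y => P y / P' y) x * ∑ j, S x i j * pd j (fun y => P y / P' y) x)
    + P' x * ∑ i, pd i (fun y => P y / P' y) x * PhiVec b b' S S' P' x i

/-- Main theorem: derivative of the relative entropy between two Fokker–Planck flows is
bounded by `(1/2)∫ p ‖Σ^{-1/2} Φ‖²`. -/
theorem relative_entropy_derivative_bound {d : ℕ}
    (b b' : Euc d → Euc d) (hb : ContDiff ℝ 1 b) (hb' : ContDiff ℝ 1 b')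
    (S S' : Euc d → Matrix (Fin d) (Fin d) ℝ)
    (hS : ∀ i j, ContDiff ℝ 2 fun x => S x i j)
    (hS' : ∀ i j, ContDiff ℝ 2 fun x => S' x i j)
    (hSpos : ∀ x, (S x).PosDef) (hS'pos : ∀ x, (S' x).PosDef)
    (p p' : ℝ → Euc d → ℝ)
    (hppos : ∀ t > (0:ℝ), ∀ x, 0 < p t x) (hp'pos : ∀ t > (0:ℝ), ∀ x, 0 < p' t x)
    (hpdens : ∀ t > (0:ℝ), ∫ x, p t x = 1) (hp'dens : ∀ t > (0:ℝ), ∫ x, p' t x = 1)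
    (hpx : ∀ t > (0:ℝ), ContDiff ℝ 2 (p t)) (hp'x : ∀ t > (0:ℝ), ContDiff ℝ 2 (p' t))
    (hpt : ∀ t > (0:ℝ), ∀ x, DifferentiableAt ℝ (fun s => p s x) t)
    (hp't : ∀ t > (0:ℝ), ∀ x, DifferentiableAt ℝ (fun s => p' s x) t)
    -- the two Fokker–Planck equations, pointwise
    (hFP : ∀ t > (0:ℝ), ∀ x, deriv (fun s => p s x) t =
      -(diverg (fun y => p t y • b y) x)
        + (1 / 2) * ∑ i, ∑ j, pd i (fun y => pd j (fun z => S z i j * p t z) y) x)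
    (hFP' : ∀ t > (0:ℝ), ∀ x, deriv (fun s => p' s x) t =
      -(diverg (fun y => p' t y • b' y) x)
        + (1 / 2) * ∑ i, ∑ j, pd i (fun y => pd j (fun z => S' z i j * p' t z) y) x)
    (t : ℝ) (ht : 0 < t)
    -- (i) differentiability of the relative entropy at `t`, with the stated derivative,
    -- and `∫ ∂_t p = 0`
    (hKderiv : HasDerivAt (fun s => KLdiv (p s) (p' s))
      ((∫ x, deriv (fun s => p s x) t * Real.log (p t x / p' t x))
        - ∫ x, (p t x / p' t x) * deriv (fun s => p' s x) t) t)
    (hmass : (∫ x, deriv (fun s => p s x) t) = 0)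
    -- (ii) finiteness of the two key integrals at time `t`
    (hint1 : Integrable (fun x =>
      p t x * ‖Matrix.toEuclideanLin ((hSpos x).posSemidef.sqrt)⁻¹
        (PhiVec b b' S S' (p' t) x)‖ ^ 2) volume)
    (hint2 : Integrable (fun x =>
      p' t x * (p' t x / p t x) * ‖Matrix.toEuclideanLin (hSpos x).posSemidef.sqrt
        (gradient (fun y => p t y / p' t y) x)‖ ^ 2) volume)
    -- (iii) vanishing boundary terms
    (hG1 : GoodField fun x => Real.log (p t x / p' t x) • Jvec b S (p t) x)
    (hG2 : GoodField fun x =>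
      p t x • Matrix.toEuclideanLin (S x) (gradient (fun y => Real.log (p t y / p' t y)) x))
    (hG3 : GoodField fun x => (p t x / p' t x) • Jvec b S (p' t) x)
    (hG4 : GoodField fun x =>
      p' t x • Matrix.toEuclideanLin (S x) (gradient (fun y => p t y / p' t y) x))
    (hG5 : GoodField fun x =>
      (p' t x * (p t x / p' t x)) • PhiVec b b' S S' (p' t) x) :
    deriv (fun s => KLdiv (p s) (p' s)) t ≤
      (1 / 2) * ∫ x, p t x * ‖Matrix.toEuclideanLin ((hSpos x).posSemidef.sqrt)⁻¹
        (PhiVec b b' S S' (p' t) x)‖ ^ 2 := by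
  have hP2 := hpx t ht
  have hP'2 := hp'x t ht
  have hPpos := hppos t ht
  have hP'pos := hp'pos t ht
  have hPne : ∀ y, p t y ≠ 0 := fun y => (hPpos y).ne'
  have hP'ne : ∀ y, p' t y ≠ 0 := fun y => (hP'pos y).ne'
  have hr2 : ContDiff ℝ 2 fun y => p t y / p' t y := hP2.div hP'2 hP'ne
  have hcoord : ∀ (x : Euc d) (i : Fin d),
      gradient (fun y => p t y / p' t y) x i = pd i (fun y => p t y / p' t y) x :=
    fun x i => gradient_apply_eq_pd i
  have hFG : ∀ x, diverg (Jvec b S (p t)) x * Real.log (p t x / p' t x)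
      - (p t x / p' t x) * diverg (Jvec b' S' (p' t)) x
      = Dfun b b' S S' (p t) (p' t) x + Kfun b b' S S' (p t) (p' t) x :=
    fun x => pointwise_identity hb hb' hS hS' hP2 hP'2 hPpos hP'pos x
  have hG5' : GoodField fun x => p t x • PhiVec b b' S S' (p' t) x := by
    have he : (fun x => (p' t x * (p t x / p' t x)) • PhiVec b b' S S' (p' t) x)
        = fun x => p t x • PhiVec b b' S S' (p' t) x := by
      funext x
      rw [show p' t x * (p t x / p' t x) = p t x from by
        rw [mul_comm, div_mul_cancel₀ _ (hP'ne x)]]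
    rw [← he]; exact hG5
  have h13 : Integrable (fun x =>
      diverg (fun y => Real.log (p t y / p' t y) • Jvec b S (p t) y) x
        - diverg (fun y => (p t y / p' t y) • Jvec b S (p' t) y) x) volume :=
    hG1.2.2.1.sub hG3.2.2.1
  have hDint : Integrable (Dfun b b' S S' (p t) (p' t)) volume :=
    h13.sub hG5'.2.2.1
  have hDzero : (∫ x, Dfun b b' S S' (p t) (p' t) x) = 0 := by
    have e1 : (∫ x, Dfun b b' S S' (p t) (p' t) x)
        = (∫ x, (diverg (fun y => Real.log (p t y / p' t y) • Jvec b S (p t) y) x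
            - diverg (fun y => (p t y / p' t y) • Jvec b S (p' t) y) x))
          - ∫ x, diverg (fun y => p t y • PhiVec b b' S S' (p' t) y) x :=
      integral_sub h13 hG5'.2.2.1
    rw [e1, integral_sub hG1.2.2.1 hG3.2.2.1, hG1.2.2.2, hG3.2.2.2, hG5'.2.2.2]
    ring
  have hQnorm : ∀ x, ‖Matrix.toEuclideanLin (hSpos x).posSemidef.sqrt
      (gradient (fun y => p t y / p' t y) x)‖ ^ 2
      = ∑ i, pd i (fun y => p t y / p' t y) x
          * ∑ j, S x i j * pd j (fun y => p t y / p' t y) x := by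
    intro x
    rw [norm_sq_sqrt_apply (hSpos x)]
    simp only [hcoord]
  have hint2' : Integrable (fun x => p' t x * (p' t x / p t x)
      * (∑ i, pd i (fun y => p t y / p' t y) x
          * ∑ j, S x i j * pd j (fun y => p t y / p' t y) x)) volume := by
    have he : (fun x => p' t x * (p' t x / p t x) * ‖Matrix.toEuclideanLin
        (hSpos x).posSemidef.sqrt (gradient (fun y => p t y / p' t y) x)‖ ^ 2)
        = fun x => p' t x * (p' t x / p t x)
            * (∑ i, pd i (fun y => p t y / p' t y) x
                * ∑ j, S x i j * pd j (fun y => p t y / p' t y) x) := by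
      funext x; rw [hQnorm x]
    rw [← he]; exact hint2
  have hΦcont : ∀ i, Continuous fun x => PhiVec b b' S S' (p' t) x i := fun i =>
    (contDiff_Phi_comp hb hb' hS hS' hP'2 hP'ne i).continuous
  have hpdrcont : ∀ i : Fin d, Continuous (pd i (fun y => p t y / p' t y)) := fun i =>
    pd_continuous (hr2.of_le one_le_two)
  have hLcont : Continuous (fun x => p' t x
      * ∑ i, pd i (fun y => p t y / p' t y) x * PhiVec b b' S S' (p' t) x i) :=
    (hP'2.continuous).mul (continuous_finset_sum _ fun i _ => (hpdrcont i).mul (hΦcont i))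
  have hLbound : ∀ x, |p' t x * ∑ i, pd i (fun y => p t y / p' t y) x
        * PhiVec b b' S S' (p' t) x i|
      ≤ (1 / 2) * (p' t x * (p' t x / p t x)
            * (∑ i, pd i (fun y => p t y / p' t y) x
                * ∑ j, S x i j * pd j (fun y => p t y / p' t y) x)
          + p t x * ‖Matrix.toEuclideanLin ((hSpos x).posSemidef.sqrt)⁻¹
              (PhiVec b b' S S' (p' t) x)‖ ^ 2) := by
    intro x
    have h := abs_L_le (hSpos x) (gradient (fun y => p t y / p' t y) x)
      (PhiVec b b' S S' (p' t) x) (hPpos x) (hP'pos x)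
    rw [hQnorm x] at h
    simp only [hcoord] at h
    exact h
  have hLint : Integrable (fun x => p' t x
      * ∑ i, pd i (fun y => p t y / p' t y) x * PhiVec b b' S S' (p' t) x i) volume := by
    refine Integrable.mono' ((hint2'.add hint1).const_mul (1 / 2))
      hLcont.aestronglyMeasurable (Filter.Eventually.of_forall fun x => ?_)
    rw [Real.norm_eq_abs]
    exact hLbound x
  have hKre : Kfun b b' S S' (p t) (p' t) = fun x =>
      (-(1 / 2)) * (p' t x * (p' t x / p t x)
          * (∑ i, pd i (fun y => p t y / p' t y) x
              * ∑ j, S x i j * pd j (fun y => p t y / p' t y) x))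
        + p' t x * ∑ i, pd i (fun y => p t y / p' t y) x * PhiVec b b' S S' (p' t) x i := by
    funext x; unfold Kfun; ring
  have hKint : Integrable (Kfun b b' S S' (p t) (p' t)) volume := by
    rw [hKre]
    exact (hint2'.const_mul _).add hLint
  have hK_le : ∀ x, Kfun b b' S S' (p t) (p' t) x
      ≤ (1 / 2) * (p t x * ‖Matrix.toEuclideanLin ((hSpos x).posSemidef.sqrt)⁻¹
          (PhiVec b b' S S' (p' t) x)‖ ^ 2) := by
    intro x
    have h := key_pointwise_ineq (hSpos x) (gradient (fun y => p t y / p' t y) x)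
      (PhiVec b b' S S' (p' t) x) (hPpos x) (hP'pos x)
    simp only [hcoord] at h
    exact h
  rw [hKderiv.deriv]
  have hfeq : (fun x => deriv (fun s => p s x) t * Real.log (p t x / p' t x))
      = fun x => diverg (Jvec b S (p t)) x * Real.log (p t x / p' t x) := by
    funext x
    rw [hFP t ht x, FP_eq_diverg_Jvec hP2 hb hS x]
  have hgeq : (fun x => (p t x / p' t x) * deriv (fun s => p' s x) t)
      = fun x => (p t x / p' t x) * diverg (Jvec b' S' (p' t)) x := by
    funext x
    rw [hFP' t ht x, FP_eq_diverg_Jvec hP'2 hb' hS' x]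
  rw [hfeq, hgeq]
  by_cases hfi : Integrable
      (fun x => diverg (Jvec b S (p t)) x * Real.log (p t x / p' t x)) volume
  · have hFKint : Integrable (fun x => Dfun b b' S S' (p t) (p' t) x
        + Kfun b b' S S' (p t) (p' t) x) volume := hDint.add hKint
    have hgi : Integrable
        (fun x => (p t x / p' t x) * diverg (Jvec b' S' (p' t)) x) volume := by
      have he : (fun x => (p t x / p' t x) * diverg (Jvec b' S' (p' t)) x)
          = fun x => (diverg (Jvec b S (p t)) x * Real.log (p t x / p' t x))
              - (Dfun b b' S S' (p t) (p' t) x + Kfun b b' S S' (p t) (p' t) x) := by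
        funext x
        have := hFG x
        linarith
      rw [he]
      exact hfi.sub hFKint
    calc (∫ x, diverg (Jvec b S (p t)) x * Real.log (p t x / p' t x))
          - ∫ x, (p t x / p' t x) * diverg (Jvec b' S' (p' t)) x
        = ∫ x, (diverg (Jvec b S (p t)) x * Real.log (p t x / p' t x)
            - (p t x / p' t x) * diverg (Jvec b' S' (p' t)) x) :=
          (integral_sub hfi hgi).symm
      _ = ∫ x, (Dfun b b' S S' (p t) (p' t) x + Kfun b b' S S' (p t) (p' t) x) := by
          exact integral_congr_ae (Filter.Eventually.of_forall hFG)
      _ = (∫ x, Dfun b b' S S' (p t) (p' t) x) + ∫ x, Kfun b b' S S' (p t) (p' t) x :=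
          integral_add hDint hKint
      _ = ∫ x, Kfun b b' S S' (p t) (p' t) x := by rw [hDzero, zero_add]
      _ ≤ ∫ x, (1 / 2) * (p t x * ‖Matrix.toEuclideanLin ((hSpos x).posSemidef.sqrt)⁻¹
            (PhiVec b b' S S' (p' t) x)‖ ^ 2) :=
          integral_mono hKint (hint1.const_mul _) hK_le
      _ = (1 / 2) * ∫ x, p t x * ‖Matrix.toEuclideanLin ((hSpos x).posSemidef.sqrt)⁻¹
            (PhiVec b b' S S' (p' t) x)‖ ^ 2 := by
          rw [integral_const_mul]
  · have hgi : ¬ Integrable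
        (fun x => (p t x / p' t x) * diverg (Jvec b' S' (p' t)) x) volume := by
      intro hg
      apply hfi
      have he : (fun x => diverg (Jvec b S (p t)) x * Real.log (p t x / p' t x))
          = fun x => ((p t x / p' t x) * diverg (Jvec b' S' (p' t)) x)
              + (Dfun b b' S S' (p t) (p' t) x + Kfun b b' S S' (p t) (p' t) x) := by
        funext x
        have := hFG x
        linarith
      rw [he]
      exact hg.add (hDint.add hKint)
    rw [integral_undef hfi, integral_undef hgi, sub_zero]
    have hnn : 0 ≤ ∫ x, p t x * ‖Matrix.toEuclideanLin ((hSpos x).posSemidef.sqrt)⁻¹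
        (PhiVec b b' S S' (p' t) x)‖ ^ 2 :=
      integral_nonneg fun x => mul_nonneg (hPpos x).le (sq_nonneg _)
    linarith

end
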